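/- In any bipartite matching instance with nonnegative edge weights and strict rankings consistent with the weights, there exists a maximum-weight perfect matching that is Pareto-optimal with respect to the rankings; consequently (by the Pareto characterization of serial-dictatorship-producible matchings), the price of serial dictatorship of maximum-weight perfect matching is 1: some action sequence produces a maximum-weight perfect matching. -/

import Mathlib

/-- The agents that precede `i` in the action (sub)sequence `π`. -/
def prefixBefore {n : ℕ} (π : List (Fin n)) (i : Fin n) : List (Fin n) :=
  π.takeWhile (fun j => j != i)

/-- A full action sequence: an ordering of all `n` agents. -/
def IsSeq {n : ℕ} (π : List (Fin n)) : Prop :=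
  π.Nodup ∧ ∀ i : Fin n, i ∈ π

/-- The serial dictatorship with ordering `π` produces the perfect matching `μ`. -/
def ProducedM {n : ℕ} (r : Fin n → Fin n → ℕ) (π : List (Fin n))
    (μ : Equiv.Perm (Fin n)) : Prop :=
  ∀ i j : Fin n, j ∉ (prefixBefore π i).map (fun k => μ k) → r i (μ i) ≤ r i j

/-- `μ` is Pareto-optimal w.r.t. the strict rankings `r`. -/
def ParetoOptM {n : ℕ} (r : Fin n → Fin n → ℕ) (μ : Equiv.Perm (Fin n)) : Prop :=
  ¬ ∃ μ' : Equiv.Perm (Fin n),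
      (∀ i, r i (μ' i) ≤ r i (μ i)) ∧ ∃ i, r i (μ' i) < r i (μ i)

/-- In any nonempty set of agents, some agent gets (under a Pareto-optimal matching)
an item at least as good as every item assigned within the set. -/
lemma exists_top {n : ℕ} (r : Fin n → Fin n → ℕ) (μ : Equiv.Perm (Fin n))
    (hμ : ParetoOptM r μ) (S : Finset (Fin n)) (hS : S.Nonempty) :
    ∃ i ∈ S, ∀ j ∈ S, r i (μ i) ≤ r i (μ j) := by
  classical
  by_contra hcon
  push_neg at hcon
  have hg : ∀ i : Fin n, ∃ j : Fin n,
      (i ∈ S → j ∈ S ∧ r i (μ j) < r i (μ i)) ∧ (i ∉ S → j = i) := by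
    intro i
    by_cases hi : i ∈ S
    · obtain ⟨j, hj, hlt⟩ := hcon i hi
      exact ⟨j, fun _ => ⟨hj, hlt⟩, fun h => absurd hi h⟩
    · exact ⟨i, fun h => absurd h hi, fun _ => rfl⟩
  choose g hg1 hg2 using hg
  obtain ⟨i₀, hi₀⟩ := hS
  have hiter : ∀ k, g^[k] i₀ ∈ S := by
    intro k
    induction k with
    | zero => simpa using hi₀
    | succ k ih =>
        rw [Function.iterate_succ_apply']
        exact (hg1 _ ih).1
  -- find a repeat
  obtain ⟨a, b, hab, heq⟩ :=
    Finite.exists_ne_map_eq_of_infinite (fun k : ℕ => g^[k] i₀)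
  -- wlog a < b
  wlog hlt : a < b generalizing a b
  · exact this b a hab.symm heq.symm (by omega)
  set x := g^[a] i₀ with hxdef
  have hfx : g^[b - a] x = x := by
    have : g^[(b - a) + a] i₀ = g^[a] i₀ := by
      rw [show (b - a) + a = b by omega]
      exact heq.symm
    rw [Function.iterate_add_apply] at this
    exact this
  have hPex : ∃ m, 0 < m ∧ g^[m] x = x := ⟨b - a, by omega, hfx⟩
  set m := Nat.find hPex with hmdef
  obtain ⟨hmpos, hmx⟩ := Nat.find_spec hPex
  have distinct : ∀ k l, k < m → l < m → g^[k] x = g^[l] x → k = l := by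
    have key : ∀ k l, k < l → l < m → g^[k] x = g^[l] x → False := by
      intro k l hkl hlm he
      have h1 : g^[m - l + k] x = x := by
        calc g^[m - l + k] x = g^[m - l] (g^[k] x) := Function.iterate_add_apply _ _ _ _
        _ = g^[m - l] (g^[l] x) := by rw [he]
        _ = g^[m - l + l] x := (Function.iterate_add_apply _ _ _ _).symm
        _ = x := by rw [show m - l + l = m by omega]; exact hmx
      exact Nat.find_min hPex (show m - l + k < m by omega) ⟨by omega, h1⟩
    intro k l hk hl he
    rcases lt_trichotomy k l with h | h | h
    · exact absurd he (fun he => key k l h hl he)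
    · exact h
    · exact absurd he.symm (fun he => key l k h hk he)
  have hmfix : ∀ q, g^[m * q] x = x := by
    intro q
    induction q with
    | zero => simp
    | succ q ih =>
        have : m * (q + 1) = m * q + m := by ring
        rw [this, Function.iterate_add_apply, hmx, ih]
  have hper : ∀ k, g^[k % m] x = g^[k] x := by
    intro k
    have hk' : k % m + m * (k / m) = k := Nat.mod_add_div k m
    conv_rhs => rw [← hk']
    rw [Function.iterate_add_apply, hmfix]
  set C : Set (Fin n) := {y | ∃ k, k < m ∧ g^[k] x = y} with hCdef
  have hCx : x ∈ C := ⟨0, hmpos, rfl⟩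
  have hCS : ∀ y ∈ C, y ∈ S := by
    rintro y ⟨k, _, rfl⟩
    rw [hxdef, ← Function.iterate_add_apply]
    exact hiter _
  have hCg : ∀ y ∈ C, g y ∈ C := by
    rintro y ⟨k, hk, rfl⟩
    refine ⟨(k + 1) % m, Nat.mod_lt _ hmpos, ?_⟩
    rw [hper]
    exact Function.iterate_succ_apply' g k x
  set c : Fin n → Fin n := fun y => if y ∈ C then g y else y with hcdef
  have hcinj : Function.Injective c := by
    intro y z h
    by_cases hy : y ∈ C <;> by_cases hz : z ∈ C
    · simp only [hcdef, if_pos hy, if_pos hz] at h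
      obtain ⟨k, hk, rfl⟩ := hy
      obtain ⟨l, hl, rfl⟩ := hz
      have h1 : g^[(k+1) % m] x = g^[(l+1) % m] x := by
        rw [hper, hper, Function.iterate_succ_apply', Function.iterate_succ_apply']
        exact h
      have h2 : (k+1) % m = (l+1) % m :=
        distinct _ _ (Nat.mod_lt _ hmpos) (Nat.mod_lt _ hmpos) h1
      have hk1 : k + 1 ≤ m := hk
      have hl1 : l + 1 ≤ m := hl
      have : k = l := by
        rcases eq_or_lt_of_le hk1 with hkm | hkm <;> rcases eq_or_lt_of_le hl1 with hlm | hlm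
        · omega
        · rw [hkm, Nat.mod_self, Nat.mod_eq_of_lt hlm] at h2; omega
        · rw [hlm, Nat.mod_self, Nat.mod_eq_of_lt hkm] at h2; omega
        · rw [Nat.mod_eq_of_lt hkm, Nat.mod_eq_of_lt hlm] at h2; omega
      rw [this]
    · simp only [hcdef, if_pos hy, if_neg hz] at h
      exact absurd (h ▸ hCg y hy) hz
    · simp only [hcdef, if_neg hy, if_pos hz] at h
      exact absurd (h ▸ hCg z hz) hy
    · simpa only [hcdef, if_neg hy, if_neg hz] using h
  have hcbij : Function.Bijective c := Finite.injective_iff_bijective.mp hcinj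
  set ce : Equiv.Perm (Fin n) := Equiv.ofBijective c hcbij with hcedef
  refine hμ ⟨ce.trans μ, ?_, x, ?_⟩
  · intro i
    simp only [Equiv.trans_apply, hcedef, Equiv.ofBijective_apply, hcdef]
    by_cases hi : i ∈ C
    · rw [if_pos hi]
      exact le_of_lt (hg1 i (hCS i hi)).2
    · rw [if_neg hi]
  · simp only [Equiv.trans_apply, hcedef, Equiv.ofBijective_apply, hcdef, if_pos hCx]
    exact (hg1 x (hCS x hCx)).2


/-- Build a serial-dictatorship order for the agents in `S`. -/
lemma build_order {n : ℕ} (r : Fin n → Fin n → ℕ) (μ : Equiv.Perm (Fin n))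
    (hμ : ParetoOptM r μ) :
    ∀ (N : ℕ) (S : Finset (Fin n)), S.card ≤ N →
      ∃ l : List (Fin n), l.Nodup ∧ (∀ a, a ∈ l ↔ a ∈ S) ∧
        ∀ i ∈ l, ∀ k ∈ S, k ∉ prefixBefore l i → r i (μ i) ≤ r i (μ k) := by
  intro N
  induction N with
  | zero =>
      intro S hS
      have : S = ∅ := Finset.card_eq_zero.mp (Nat.le_zero.mp hS)
      subst this
      exact ⟨[], by simp, by simp, by simp⟩
  | succ N ih =>
      intro S hS
      rcases S.eq_empty_or_nonempty with h | h
      · subst h; exact ⟨[], by simp, by simp, by simp⟩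
      · obtain ⟨i, hiS, hi⟩ := exists_top r μ hμ S h
        obtain ⟨l, hnd, hmem, hpr⟩ := ih (S.erase i) (by
          have := Finset.card_erase_of_mem hiS; omega)
        refine ⟨i :: l, ?_, ?_, ?_⟩
        · refine List.nodup_cons.mpr ⟨fun h' => ?_, hnd⟩
          exact (Finset.notMem_erase i S) ((hmem i).mp h')
        · intro a
          simp only [List.mem_cons, hmem, Finset.mem_erase]
          constructor
          · rintro (rfl | ⟨_, ha⟩)
            · exact hiS
            · exact ha
          · intro ha
            by_cases hai : a = i
            · exact Or.inl hai
            · exact Or.inr ⟨hai, ha⟩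
        · intro i' hi' k hk hkpre
          rcases List.mem_cons.mp hi' with rfl | hi'l
          · exact hi k hk
          · have hne : (i' : Fin n) ≠ i := (Finset.mem_erase.mp ((hmem i').mp hi'l)).1
            have hpre : prefixBefore (i :: l) i' = i :: prefixBefore l i' := by
              simp [prefixBefore, List.takeWhile_cons, hne.symm]
            rw [hpre] at hkpre
            have hki : k ≠ i := fun h => hkpre (h ▸ List.mem_cons_self)
            have hknp : k ∉ prefixBefore l i' := fun h => hkpre (List.mem_cons_of_mem _ h)
            exact hpr i' hi'l k (Finset.mem_erase.mpr ⟨hki, hk⟩) hknp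

/-- Every Pareto-optimal matching is produced by some serial dictatorship order. -/
lemma pareto_produced {n : ℕ} (r : Fin n → Fin n → ℕ) (μ : Equiv.Perm (Fin n))
    (hμ : ParetoOptM r μ) : ∃ π, IsSeq π ∧ ProducedM r π μ := by
  obtain ⟨l, hnd, hmem, hpr⟩ :=
    build_order r μ hμ (Finset.univ : Finset (Fin n)).card Finset.univ le_rfl
  refine ⟨l, ⟨hnd, fun i => (hmem i).mpr (Finset.mem_univ i)⟩, ?_⟩
  intro i j hj
  have hiπ : i ∈ l := (hmem i).mpr (Finset.mem_univ i)
  have hk : μ (μ.symm j) = j := μ.apply_symm_apply j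
  have hknp : μ.symm j ∉ prefixBefore l i := fun h => hj (List.mem_map.mpr ⟨μ.symm j, h, hk⟩)
  have := hpr i hiπ (μ.symm j) (Finset.mem_univ _) hknp
  rwa [hk] at this

/-- with rankings consistent with the nonnegative weights, there is a
maximum-weight perfect matching that is Pareto-optimal, and hence producible by a
serial dictatorship: the price of serial dictatorship of maximum-weight perfect
matching is 1. -/
theorem stmt12 {n : ℕ} (w : Fin n → Fin n → ℝ) (hw0 : ∀ i j, 0 ≤ w i j)
    (r : Fin n → Fin n → ℕ) (hr : ∀ i, Function.Injective (r i))
    (hwr : ∀ i j j', r i j < r i j' → w i j' ≤ w i j) :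
    ∃ μ : Equiv.Perm (Fin n),
      (∀ μ' : Equiv.Perm (Fin n), ∑ i, w i (μ' i) ≤ ∑ i, w i (μ i)) ∧
      ParetoOptM r μ ∧ ∃ π, IsSeq π ∧ ProducedM r π μ := by
  classical
  obtain ⟨μ₀, -, hμ₀⟩ := Finset.exists_max_image (Finset.univ : Finset (Equiv.Perm (Fin n)))
    (fun ν => ∑ i, w i (ν i)) ⟨1, Finset.mem_univ 1⟩
  set B : Finset (Equiv.Perm (Fin n)) :=
    Finset.univ.filter (fun ν => ∑ i, w i (ν i) = ∑ i, w i (μ₀ i)) with hB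
  have hμ₀B : μ₀ ∈ B := by simp [hB]
  obtain ⟨μ, hμB, hμmin⟩ := Finset.exists_min_image B (fun ν => ∑ i, r i (ν i)) ⟨μ₀, hμ₀B⟩
  have hμw : ∑ i, w i (μ i) = ∑ i, w i (μ₀ i) := by
    simpa [hB] using hμB
  have hmax : ∀ μ' : Equiv.Perm (Fin n), ∑ i, w i (μ' i) ≤ ∑ i, w i (μ i) := by
    intro μ'
    rw [hμw]
    exact hμ₀ μ' (Finset.mem_univ _)
  have hpar : ParetoOptM r μ := by
    rintro ⟨μ', hle, i₀, hlt⟩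
    have hw' : ∀ i ∈ Finset.univ, w i (μ i) ≤ w i (μ' i) := by
      intro i _
      rcases lt_or_eq_of_le (hle i) with h | h
      · exact hwr i (μ' i) (μ i) h
      · rw [hr i h]
    have hsum : ∑ i, w i (μ i) ≤ ∑ i, w i (μ' i) := Finset.sum_le_sum hw'
    have hμ'B : μ' ∈ B := by
      simp only [hB, Finset.mem_filter, Finset.mem_univ, true_and]
      have := hmax μ'
      rw [← hμw]
      linarith
    have h1 : ∑ i, r i (μ i) ≤ ∑ i, r i (μ' i) := hμmin μ' hμ'B
    have h2 : ∑ i, r i (μ' i) < ∑ i, r i (μ i) :=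
      Finset.sum_lt_sum (fun i _ => hle i) ⟨i₀, Finset.mem_univ i₀, hlt⟩
    omega
  exact ⟨μ, hmax, hpar, pareto_produced r μ hpar⟩
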